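/- Let a, b, c be points in ℝ^{d+1} lying on the paraboloid {x : x_{d+1} = x_1² + ⋯ + x_d²}, with ā = (a_1,…,a_d) ≠ 0, where x̄ denotes the first d coordinates of x. Then a·b = a·c (dot product in ℝ^{d+1}) if and only if |(-ā)/(2|ā|²) - b̄| = |(-ā)/(2|ā|²) - c̄| (Euclidean distance in ℝ^d). -/

import Mathlib

open scoped InnerProductSpace

/-- Projection of a point of `ℝ^{d+1}` onto its first `d` coordinates. -/
noncomputable def projBase (d : ℕ) (x : EuclideanSpace ℝ (Fin (d + 1))) :
    EuclideanSpace ℝ (Fin d) := WithLp.toLp 2 (fun i : Fin d => x i.castSucc)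

lemma inner_split (d : ℕ) (a b : EuclideanSpace ℝ (Fin (d + 1))) :
    ⟪a, b⟫_ℝ = ⟪projBase d a, projBase d b⟫_ℝ + a (Fin.last d) * b (Fin.last d) := by
  simp [PiLp.inner_apply, Fin.sum_univ_castSucc, projBase, RCLike.inner_apply,
    mul_comm]

/-- If `a, b, c` lie on the paraboloid `x_{d+1} = x_1² + ⋯ + x_d²` and `ā ≠ 0`, then
`a·b = a·c` iff `|(-ā)/(2|ā|²) - b̄| = |(-ā)/(2|ā|²) - c̄|`. -/
theorem dot_eq_iff_isosceles (d : ℕ) (a b c : EuclideanSpace ℝ (Fin (d + 1)))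
    (ha : a (Fin.last d) = ‖projBase d a‖ ^ 2)
    (hb : b (Fin.last d) = ‖projBase d b‖ ^ 2)
    (hc : c (Fin.last d) = ‖projBase d c‖ ^ 2)
    (ha0 : projBase d a ≠ 0) :
    ⟪a, b⟫_ℝ = ⟪a, c⟫_ℝ ↔
      ‖(-(1 / (2 * ‖projBase d a‖ ^ 2))) • projBase d a - projBase d b‖ =
        ‖(-(1 / (2 * ‖projBase d a‖ ^ 2))) • projBase d a - projBase d c‖ := by
  set A := ‖projBase d a‖ with hA
  have hApos : 0 < A := norm_pos_iff.mpr ha0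
  set t : ℝ := -(1 / (2 * A ^ 2)) with ht
  have key : ∀ y : EuclideanSpace ℝ (Fin d),
      ‖t • projBase d a - y‖ ^ 2
        = t ^ 2 * A ^ 2 - 2 * t * ⟪projBase d a, y⟫_ℝ + ‖y‖ ^ 2 := by
    intro y
    rw [norm_sub_sq_real, norm_smul, real_inner_smul_left, Real.norm_eq_abs, mul_pow, sq_abs]
    ring
  have hsq : (‖t • projBase d a - projBase d b‖ = ‖t • projBase d a - projBase d c‖)
      ↔ (‖t • projBase d a - projBase d b‖ ^ 2 = ‖t • projBase d a - projBase d c‖ ^ 2) := by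
    constructor
    · intro h; rw [h]
    · intro h
      nlinarith [norm_nonneg (t • projBase d a - projBase d b),
        norm_nonneg (t • projBase d a - projBase d c)]
  rw [hsq, key, key, inner_split, inner_split, ha, hb, hc]
  have hA2 : (A : ℝ) ^ 2 ≠ 0 := by positivity
  set p := ⟪projBase d a, projBase d b⟫_ℝ with hp
  set q := ⟪projBase d a, projBase d c⟫_ℝ with hq
  rw [ht]
  constructor
  · intro h
    field_simp
    linear_combination 4 * h
  · intro h
    field_simp at h
    have h3 : 8 * A ^ 4 * (p + A ^ 2 * ‖projBase d b‖ ^ 2)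
        = 8 * A ^ 4 * (q + A ^ 2 * ‖projBase d c‖ ^ 2) := by linear_combination 2 * A ^ 4 * h
    exact mul_left_cancel₀ (by positivity : (8 * A ^ 4 : ℝ) ≠ 0) h3
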